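/- Let ξ be a square-integrable random variable and suppose ξ = U_0 + Σ_{k=0}^{N−1} H^H_k·ΔM_k + O_N P-a.s., where U_0 is square-integrable H_0-measurable, H^H is an admissible ℍ-predictable process, O_N is square-integrable, and E[O_N · Σ_{k=0}^{N−1} φ_k·ΔM_k] = 0 for every admissible ℍ-predictable process φ. Then for every admissible ℍ-predictable process θ and every n ≤ N, E[(ξ − E[ξ|F_n] − Σ_{k=n}^{N−1} θ_k·ΔM_k)² | H_n] ≥ E[(ξ − E[ξ|F_n] − Σ_{k=n}^{N−1} H^H_k·ΔM_k)² | H_n] P-almost surely. -/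

import Mathlib

open MeasureTheory

section Aux

variable {Ω : Type*} {m m0 : MeasurableSpace Ω} {P : Measure Ω}

lemma aux_int_mul {f g : Ω → ℝ} (hf : MemLp f 2 P) (hg : MemLp g 2 P) :
    Integrable (fun ω => f ω * g ω) P := by
  have h := hg.smul (φ := f) hf (r := 1)
  exact memLp_one_iff_integrable.mp h

lemma aux_memLp_condexp [IsFiniteMeasure P] (hm : m ≤ m0) {f : Ω → ℝ} (hf : MemLp f 2 P) :
    MemLp (P[f|m]) 2 P := by
  have hfi : Integrable f P := hf.integrable one_le_two
  set g : Ω → ℝ := ((condExpL2 ℝ ℝ hm (hf.toLp f) : Ω →₂[P] ℝ) : Ω → ℝ) with hg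
  have hgmem : MemLp g 2 P := Lp.memLp _
  have hgP : g =ᵐ[P] P[f|m] := by
    refine ae_eq_condExp_of_forall_setIntegral_eq hm hfi ?_ ?_ ?_
    · intro s hs hμs
      exact integrableOn_condExpL2_of_measure_ne_top hm hμs.ne _
    · intro s hs hμs
      rw [integral_condExpL2_eq hm (hf.toLp f) hs hμs.ne]
      exact setIntegral_congr_ae (hm s hs) ((hf.coeFn_toLp).mono fun x hx _ => hx)
    · exact aestronglyMeasurable_condExpL2 hm _
  exact hgmem.ae_eq hgP

lemma aux_integral_eq_zero [IsFiniteMeasure P] (hm : m ≤ m0) {h Y : Ω → ℝ}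
    (hh : StronglyMeasurable[m] h) (hY : Integrable Y P)
    (hhY : Integrable (fun ω => h ω * Y ω) P) (hY0 : P[Y|m] =ᵐ[P] 0) :
    ∫ ω, h ω * Y ω ∂P = 0 := by
  have h1 : P[fun ω => h ω * Y ω|m] =ᵐ[P] fun ω => h ω * (P[Y|m]) ω :=
    condExp_mul_of_stronglyMeasurable_left hh hhY hY
  have h2 : P[fun ω => h ω * Y ω|m] =ᵐ[P] 0 := by
    filter_upwards [h1, hY0] with ω hω hω0
    simp [hω, hω0]
  calc ∫ ω, h ω * Y ω ∂P = ∫ ω, (P[fun ω => h ω * Y ω|m]) ω ∂P := (integral_condExp hm).symm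
    _ = ∫ ω, (0 : Ω → ℝ) ω ∂P := integral_congr_ae h2
    _ = 0 := by simp

lemma aux_memLp_sum {ι : Type*} (s : Finset ι) (f : ι → Ω → ℝ)
    (h : ∀ k ∈ s, MemLp (f k) 2 P) : MemLp (fun ω => ∑ k ∈ s, f k ω) 2 P := by
  have := memLp_finset_sum' s h
  have heq : (∑ i ∈ s, f i) = fun ω => ∑ k ∈ s, f k ω := by
    funext ω; simp [Finset.sum_apply]
  rwa [heq] at this

end Aux

/-- Discrete form of the paper's Theorem 5.6: if `ξ = U₀ + Σ H^H_k ΔM_k + O_N` a.s. is the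
partial-information GKW decomposition, then the strategy with risky holdings `H^H`
minimizes the `ℍ`-risk: for every admissible `ℍ`-predictable `θ` and `n ≤ N`,
`E[(ξ − E[ξ|𝔽 n] − Σ_{k=n}^{N−1} H^H_k ΔM_k)² | ℍ n]
  ≤ E[(ξ − E[ξ|𝔽 n] − Σ_{k=n}^{N−1} θ_k ΔM_k)² | ℍ n]` a.s. -/
theorem stmt_15 {Ω : Type*} {mΩ : MeasurableSpace Ω} {P : Measure Ω} [IsProbabilityMeasure P]
    (N : ℕ) (𝔽 ℍ : Filtration ℕ mΩ) (hle : ∀ k, ℍ k ≤ 𝔽 k)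
    (M : ℕ → Ω → ℝ) (hM : Martingale M 𝔽 P) (hM2 : ∀ k, MemLp (M k) 2 P)
    (ξ : Ω → ℝ) (hξ : MemLp ξ 2 P)
    (U₀ : Ω → ℝ) (HH : ℕ → Ω → ℝ) (ON : Ω → ℝ)
    (hU₀meas : StronglyMeasurable[ℍ 0] U₀) (hU₀2 : MemLp U₀ 2 P)
    (hHHmeas : ∀ k, StronglyMeasurable[ℍ k] (HH k))
    (hHHM2 : ∀ k, MemLp (fun ω => HH k ω * (M (k + 1) ω - M k ω)) 2 P)
    (hON2 : MemLp ON 2 P)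
    (horth : ∀ φ : ℕ → Ω → ℝ, (∀ k, StronglyMeasurable[ℍ k] (φ k)) →
      (∀ k, MemLp (fun ω => φ k ω * (M (k + 1) ω - M k ω)) 2 P) →
      ∫ ω, ON ω * ∑ k ∈ Finset.range N, φ k ω * (M (k + 1) ω - M k ω) ∂P = 0)
    (hdec : ξ =ᵐ[P] fun ω =>
      U₀ ω + (∑ k ∈ Finset.range N, HH k ω * (M (k + 1) ω - M k ω)) + ON ω) :
    ∀ θ : ℕ → Ω → ℝ, (∀ k, StronglyMeasurable[ℍ k] (θ k)) →
      (∀ k, MemLp (fun ω => θ k ω * (M (k + 1) ω - M k ω)) 2 P) →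
      ∀ n ≤ N,
        P[fun ω => (ξ ω - (P[ξ | 𝔽 n]) ω
            - ∑ k ∈ Finset.Ico n N, HH k ω * (M (k + 1) ω - M k ω)) ^ 2 | ℍ n]
          ≤ᵐ[P]
        P[fun ω => (ξ ω - (P[ξ | 𝔽 n]) ω
            - ∑ k ∈ Finset.Ico n N, θ k ω * (M (k + 1) ω - M k ω)) ^ 2 | ℍ n] := by
  intro θ hθmeas hθ2 n hn
  -- notation
  set D : ℕ → Ω → ℝ := fun k ω => M (k + 1) ω - M k ω with hD
  set Fn : Ω → ℝ := P[ξ | 𝔽 n] with hFn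
  set ψ : ℕ → Ω → ℝ := fun k ω => HH k ω - θ k ω with hψ
  set S : Ω → ℝ := fun ω => ∑ k ∈ Finset.Ico n N, ψ k ω * D k ω with hS
  set RH : Ω → ℝ := fun ω => ξ ω - Fn ω - ∑ k ∈ Finset.Ico n N, HH k ω * D k ω with hRH
  set Rθ : Ω → ℝ := fun ω => ξ ω - Fn ω - ∑ k ∈ Finset.Ico n N, θ k ω * D k ω with hRθ
  -- basic MemLp facts
  have hψD2 : ∀ k, MemLp (fun ω => ψ k ω * D k ω) 2 P := by
    intro k
    have : (fun ω => ψ k ω * D k ω)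
        = fun ω => HH k ω * D k ω - θ k ω * D k ω := by funext ω; simp [hψ]; ring
    rw [this]
    exact (hHHM2 k).sub (hθ2 k)
  have hS2 : MemLp S 2 P := aux_memLp_sum _ _ (fun k _ => hψD2 k)
  have hFn2 : MemLp Fn 2 P := aux_memLp_condexp (𝔽.le n) hξ
  have hSumHH2 : MemLp (fun ω => ∑ k ∈ Finset.Ico n N, HH k ω * D k ω) 2 P :=
    aux_memLp_sum _ _ (fun k _ => hHHM2 k)
  have hSumθ2 : MemLp (fun ω => ∑ k ∈ Finset.Ico n N, θ k ω * D k ω) 2 P :=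
    aux_memLp_sum _ _ (fun k _ => hθ2 k)
  have hRH2 : MemLp RH 2 P := ((hξ.sub hFn2).sub hSumHH2)
  have hRθ2 : MemLp Rθ 2 P := ((hξ.sub hFn2).sub hSumθ2)
  -- the F_n-measurable part G of RH
  set G : Ω → ℝ :=
    fun ω => U₀ ω + (∑ k ∈ Finset.range n, HH k ω * D k ω) - Fn ω with hG
  have hRHae : RH =ᵐ[P] fun ω => G ω + ON ω := by
    filter_upwards [hdec] with ω hω
    have hsplit : (∑ k ∈ Finset.range n, HH k ω * D k ω)
        + ∑ k ∈ Finset.Ico n N, HH k ω * D k ω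
        = ∑ k ∈ Finset.range N, HH k ω * D k ω :=
      Finset.sum_range_add_sum_Ico _ hn
    simp only [hRH, hG]
    rw [hω]
    simp only [hD] at hsplit ⊢
    linarith
  have hGmeas : StronglyMeasurable[𝔽 n] G := by
    refine StronglyMeasurable.sub (StronglyMeasurable.add ?_ ?_) stronglyMeasurable_condExp
    · exact hU₀meas.mono ((hle 0).trans (𝔽.mono (Nat.zero_le n)))
    · refine Finset.stronglyMeasurable_fun_sum _ (fun k hk => ?_)
      have hkn : k < n := Finset.mem_range.mp hk
      refine StronglyMeasurable.mul ?_ (StronglyMeasurable.sub ?_ ?_)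
      · exact (hHHmeas k).mono ((hle k).trans (𝔽.mono hkn.le))
      · exact (hM.stronglyAdapted (k + 1)).mono (𝔽.mono hkn)
      · exact (hM.stronglyAdapted k).mono (𝔽.mono hkn.le)
  have hG2 : MemLp G 2 P :=
    (hU₀2.add (aux_memLp_sum (Finset.range n) _ (fun k _ => hHHM2 k))).sub hFn2
  -- conditional expectation of increments is zero
  have hD0 : ∀ k, P[D k|𝔽 k] =ᵐ[P] 0 := by
    intro k
    have h2 : P[D k|𝔽 k] =ᵐ[P] P[M (k+1)|𝔽 k] - P[M k|𝔽 k] :=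
      condExp_sub ((hM2 (k+1)).integrable one_le_two) ((hM2 k).integrable one_le_two) _
    have h3 := hM.condExp_ae_eq (Nat.le_succ k)
    have h4 := hM.condExp_ae_eq (le_refl k)
    filter_upwards [h2, h3, h4] with ω hω2 hω3 hω4
    simp only [Pi.sub_apply] at hω2
    simp [hω2, hω3, hω4]
  -- key: ∫_s RH * S = 0 for all s ∈ ℍ n
  have hsetint : ∀ s : Set Ω, MeasurableSet[ℍ n] s → ∫ ω in s, RH ω * S ω ∂P = 0 := by
    intro s hs
    have hsm : MeasurableSet s := (ℍ.le n) s hs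
    have hind : ∀ f : Ω → ℝ, ∫ ω in s, f ω ∂P = ∫ ω, s.indicator (fun _ => (1:ℝ)) ω * f ω ∂P := by
      intro f
      rw [← integral_indicator hsm]
      congr 1
      funext ω
      by_cases hωs : ω ∈ s <;> simp [hωs]
    -- part 1: ∫_s G * S = 0
    have hpart1 : ∫ ω in s, G ω * S ω ∂P = 0 := by
      rw [hind]
      have heq : (fun ω => s.indicator (fun _ => (1:ℝ)) ω * (G ω * S ω))
          = fun ω => ∑ k ∈ Finset.Ico n N,
              (s.indicator (fun _ => (1:ℝ)) ω * G ω) * (ψ k ω * D k ω) := by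
        funext ω
        simp only [hS, Finset.mul_sum]
        refine Finset.sum_congr rfl (fun k _ => by ring)
      have hsG2 : MemLp (fun ω => s.indicator (fun _ => (1:ℝ)) ω * G ω) 2 P := by
        have : (fun ω => s.indicator (fun _ => (1:ℝ)) ω * G ω) = s.indicator G := by
          funext ω; by_cases hωs : ω ∈ s <;> simp [hωs]
        rw [this]
        exact hG2.indicator hsm
      have hterm : ∀ k ∈ Finset.Ico n N,
          ∫ ω, (s.indicator (fun _ => (1:ℝ)) ω * G ω) * (ψ k ω * D k ω) ∂P = 0 := by
        intro k hk
        obtain ⟨hnk, hkN⟩ := Finset.mem_Ico.mp hk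
        have hmeas : StronglyMeasurable[𝔽 k]
            (fun ω => (s.indicator (fun _ => (1:ℝ)) ω * G ω) * ψ k ω) := by
          refine StronglyMeasurable.mul (StronglyMeasurable.mul ?_ ?_) ?_
          · exact stronglyMeasurable_const.indicator ((𝔽.mono hnk) s ((hle n) s hs))
          · exact hGmeas.mono (𝔽.mono hnk)
          · exact ((hHHmeas k).sub (hθmeas k)).mono (hle k)
        have hintfull : Integrable
            (fun ω => ((s.indicator (fun _ => (1:ℝ)) ω * G ω) * ψ k ω) * D k ω) P := by
          have := aux_int_mul hsG2 (hψD2 k)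
          refine this.congr ?_
          filter_upwards with ω
          ring
        have := aux_integral_eq_zero (𝔽.le k) hmeas
          (((hM2 (k+1)).sub (hM2 k)).integrable one_le_two) hintfull (hD0 k)
        calc ∫ ω, (s.indicator (fun _ => (1:ℝ)) ω * G ω) * (ψ k ω * D k ω) ∂P
            = ∫ ω, ((s.indicator (fun _ => (1:ℝ)) ω * G ω) * ψ k ω) * D k ω ∂P := by
              congr 1; funext ω; ring
          _ = 0 := this
      rw [heq, integral_finset_sum]
      · exact Finset.sum_eq_zero hterm
      · intro k hk
        have := aux_int_mul hsG2 (hψD2 k)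
        exact this
    -- part 2: ∫_s ON * S = 0 via the orthogonality hypothesis
    have hpart2 : ∫ ω in s, ON ω * S ω ∂P = 0 := by
      rw [hind]
      set φ : ℕ → Ω → ℝ := fun k ω =>
        if n ≤ k then s.indicator (fun _ => (1:ℝ)) ω * ψ k ω else 0 with hφ
      have hφmeas : ∀ k, StronglyMeasurable[ℍ k] (φ k) := by
        intro k
        by_cases hnk : n ≤ k
        · have : φ k = fun ω => s.indicator (fun _ => (1:ℝ)) ω * ψ k ω := by
            funext ω; simp [hφ, hnk]
          rw [this]
          refine StronglyMeasurable.mul ?_ ?_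
          · exact (stronglyMeasurable_const.indicator ((ℍ.mono hnk) s hs))
          · exact (hHHmeas k).sub (hθmeas k)
        · have : φ k = fun _ => 0 := by funext ω; simp [hφ, hnk]
          rw [this]; exact stronglyMeasurable_const
      have hφ2 : ∀ k, MemLp (fun ω => φ k ω * D k ω) 2 P := by
        intro k
        by_cases hnk : n ≤ k
        · have : (fun ω => φ k ω * D k ω)
              = s.indicator (fun ω => ψ k ω * D k ω) := by
            funext ω; by_cases hωs : ω ∈ s <;> simp [hφ, hnk, hωs]
          rw [this]
          exact (hψD2 k).indicator hsm
        · have : (fun ω => φ k ω * D k ω) = fun _ => 0 := by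
            funext ω; simp [hφ, hnk]
          rw [this]; exact memLp_const 0
      have h0 := horth φ hφmeas hφ2
      have heqsum : ∀ ω, (∑ k ∈ Finset.range N, φ k ω * D k ω)
          = s.indicator (fun _ => (1:ℝ)) ω * S ω := by
        intro ω
        rw [← Finset.sum_range_add_sum_Ico (fun k => φ k ω * D k ω) hn]
        have hz : (∑ k ∈ Finset.range n, φ k ω * D k ω) = 0 := by
          refine Finset.sum_eq_zero (fun k hk => ?_)
          have : ¬ n ≤ k := Nat.not_le.mpr (Finset.mem_range.mp hk)
          simp [hφ, this]
        rw [hz, zero_add, hS, Finset.mul_sum]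
        refine Finset.sum_congr rfl (fun k hk => ?_)
        have : n ≤ k := (Finset.mem_Ico.mp hk).1
        simp [hφ, this]; ring
      rw [show (fun ω => s.indicator (fun _ => (1:ℝ)) ω * (ON ω * S ω))
          = fun ω => ON ω * ∑ k ∈ Finset.range N, φ k ω * D k ω from ?_]
      · exact h0
      · funext ω; rw [heqsum ω]; ring
    -- combine
    have hRS : (fun ω => RH ω * S ω) =ᵐ[P] fun ω => G ω * S ω + ON ω * S ω := by
      filter_upwards [hRHae] with ω hω
      rw [hω]; ring
    have hGS : Integrable (fun ω => G ω * S ω) P := aux_int_mul hG2 hS2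
    have hONS : Integrable (fun ω => ON ω * S ω) P := aux_int_mul hON2 hS2
    calc ∫ ω in s, RH ω * S ω ∂P = ∫ ω in s, (G ω * S ω + ON ω * S ω) ∂P :=
          setIntegral_congr_ae hsm (hRS.mono fun ω hω _ => hω)
      _ = (∫ ω in s, G ω * S ω ∂P) + ∫ ω in s, ON ω * S ω ∂P :=
          integral_add hGS.integrableOn hONS.integrableOn
      _ = 0 := by rw [hpart1, hpart2, add_zero]
  -- conditional expectation of the cross term is zero
  have hcross_int : Integrable (fun ω => 2 * (RH ω * S ω)) P :=
    (aux_int_mul hRH2 hS2).const_mul 2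
  have hcross : P[fun ω => 2 * (RH ω * S ω)|ℍ n] =ᵐ[P] 0 := by
    refine ((ae_eq_condExp_of_forall_setIntegral_eq (ℍ.le n) hcross_int ?_ ?_ ?_)).symm
    · intro t ht hμt
      exact (integrable_zero _ _ _).integrableOn
    · intro t ht hμt
      have : ∫ ω in t, 2 * (RH ω * S ω) ∂P = 2 * ∫ ω in t, RH ω * S ω ∂P :=
        integral_const_mul 2 _
      rw [this, hsetint t ht, mul_zero]
      simp
    · exact StronglyMeasurable.aestronglyMeasurable
        (stronglyMeasurable_const : StronglyMeasurable[ℍ n] (fun _ => (0:ℝ)))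
  -- integrability of squares
  have hRHsq_int : Integrable (fun ω => RH ω ^ 2) P := by
    have := aux_int_mul hRH2 hRH2
    refine this.congr ?_; filter_upwards with ω; rw [sq]
  have hSsq_int : Integrable (fun ω => S ω ^ 2) P := by
    have := aux_int_mul hS2 hS2
    refine this.congr ?_; filter_upwards with ω; rw [sq]
  have hrest_int : Integrable (fun ω => 2 * (RH ω * S ω) + S ω ^ 2) P :=
    hcross_int.add hSsq_int
  -- pointwise decomposition
  have hptw : (fun ω => Rθ ω ^ 2)
      = fun ω => RH ω ^ 2 + (2 * (RH ω * S ω) + S ω ^ 2) := by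
    funext ω
    have hSω : S ω = (∑ k ∈ Finset.Ico n N, HH k ω * D k ω)
        - ∑ k ∈ Finset.Ico n N, θ k ω * D k ω := by
      simp only [hS, hψ]
      rw [← Finset.sum_sub_distrib]
      exact Finset.sum_congr rfl (fun k _ => by ring)
    have hRS : Rθ ω = RH ω + S ω := by
      simp only [hRθ, hRH]
      rw [hSω]; ring
    rw [hRS]; ring
  -- assemble
  have hsplit : P[fun ω => Rθ ω ^ 2|ℍ n]
      =ᵐ[P] P[fun ω => RH ω ^ 2|ℍ n] + P[fun ω => 2 * (RH ω * S ω) + S ω ^ 2|ℍ n] := by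
    rw [show (fun ω => Rθ ω ^ 2)
        = (fun ω => RH ω ^ 2) + (fun ω => 2 * (RH ω * S ω) + S ω ^ 2) from ?_]
    · exact condExp_add hRHsq_int hrest_int _
    · rw [hptw]; rfl
  have hsplit2 : P[fun ω => 2 * (RH ω * S ω) + S ω ^ 2|ℍ n]
      =ᵐ[P] P[fun ω => 2 * (RH ω * S ω)|ℍ n] + P[fun ω => S ω ^ 2|ℍ n] := by
    rw [show (fun ω => 2 * (RH ω * S ω) + S ω ^ 2)
        = (fun ω => 2 * (RH ω * S ω)) + (fun ω => S ω ^ 2) from rfl]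
    exact condExp_add hcross_int hSsq_int _
  have hpos : 0 ≤ᵐ[P] P[fun ω => S ω ^ 2|ℍ n] :=
    condExp_nonneg (Filter.Eventually.of_forall fun ω => sq_nonneg _)
  filter_upwards [hsplit, hsplit2, hcross, hpos] with ω h1 h2 h3 h4
  simp only [Pi.add_apply] at h1 h2
  simp only [Pi.zero_apply] at h3 h4
  calc (P[fun ω => RH ω ^ 2|ℍ n]) ω
      ≤ (P[fun ω => RH ω ^ 2|ℍ n]) ω + ((P[fun ω => 2*(RH ω*S ω)|ℍ n]) ω
          + (P[fun ω => S ω ^ 2|ℍ n]) ω) := by rw [h3]; simp [h4]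
    _ = (P[fun ω => Rθ ω ^ 2|ℍ n]) ω := by rw [h1, h2]
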